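/- For n = 2, the Cauchy identity Σ_{u∈ℕ²} K_u(x₁,x₂) K̂_{(u₂,u₁)}(y₁,y₂) = 1/((1-x₁y₁)(1-x₁y₂)(1-x₂y₁)) holds as an identity of formal power series, where for weakly decreasing u the key polynomials are K_u = K̂_u = x₁^{u₁}x₂^{u₂}, and for u₁ < u₂, K_{(u₁,u₂)} = (x^{(u₂,u₁)})π₁ and K̂_{(u₁,u₂)} = (x^{(u₂,u₁)})π̂₁. -/

import Mathlib

open scoped Classical

/-- The key polynomial `K_{(a,b)}(s,t)`: for `b ≤ a` (weakly decreasing index) it is the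
monomial `s^a t^b`; for `a < b` it is `(s^b t^a)π₁ = Σ_{j=a}^{b} s^j t^{a+b-j}`
(the Schur polynomial `s_{(b,a)}`). -/
noncomputable def keyK {R : Type*} [CommRing R] (a b : ℕ) (s t : R) : R :=
  if b ≤ a then s ^ a * t ^ b else ∑ j ∈ Finset.Icc a b, s ^ j * t ^ (a + b - j)

/-- The dual key polynomial `K̂_{(a,b)}(s,t)`: for `b ≤ a` it is `s^a t^b`; for `a < b`
it is `(s^b t^a)π̂₁ = K_{(a,b)} - s^b t^a`. -/
noncomputable def keyKhat {R : Type*} [CommRing R] (a b : ℕ) (s t : R) : R :=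
  if b ≤ a then s ^ a * t ^ b
  else (∑ j ∈ Finset.Icc a b, s ^ j * t ^ (a + b - j)) - s ^ b * t ^ a

open MvPowerSeries Finsupp


namespace CauchyAux


/-- indicator power series -/
noncomputable def S (c : (Fin 4 →₀ ℕ) → Prop) : MvPowerSeries (Fin 4) ℚ :=
  fun d => if c d then 1 else 0

lemma coeff_S (c : (Fin 4 →₀ ℕ) → Prop) (d : Fin 4 →₀ ℕ) :
    MvPowerSeries.coeff (R := ℚ) d (S c) = if c d then 1 else 0 := rfl

lemma coeff_one_sub (i j : Fin 4) (hij : i ≠ j) (f : MvPowerSeries (Fin 4) ℚ)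
    (d : Fin 4 →₀ ℕ) :
    MvPowerSeries.coeff (R := ℚ) d ((1 - MvPowerSeries.X i * MvPowerSeries.X j) * f)
      = MvPowerSeries.coeff (R := ℚ) d f -
        if 1 ≤ d i ∧ 1 ≤ d j then
          MvPowerSeries.coeff (R := ℚ) (d - (single i 1 + single j 1)) f else 0 := by
  have hX : (MvPowerSeries.X i * MvPowerSeries.X j : MvPowerSeries (Fin 4) ℚ)
      = monomial (R := ℚ) (single i 1 + single j 1) 1 := by
    rw [X_def, X_def, monomial_mul_monomial, one_mul]
  have hcond : (single i 1 + single j 1 ≤ d) ↔ (1 ≤ d i ∧ 1 ≤ d j) := by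
    rw [Finsupp.le_def]
    constructor
    · intro h
      refine ⟨?_, ?_⟩
      · have := h i
        simpa [Finsupp.add_apply, Finsupp.single_apply, hij.symm] using this
      · have := h j
        simpa [Finsupp.add_apply, Finsupp.single_apply, hij] using this
    · rintro ⟨h1, h2⟩ s
      rcases eq_or_ne i s with rfl | hi
      · simpa [Finsupp.add_apply, Finsupp.single_apply, hij.symm] using h1
      · rcases eq_or_ne j s with rfl | hj
        · simpa [Finsupp.add_apply, Finsupp.single_apply, hij, hi] using h2
        · simp [Finsupp.add_apply, Finsupp.single_apply, hi, hj]
  rw [sub_mul, one_mul, map_sub, hX, coeff_monomial_mul, one_mul]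
  by_cases h : single i 1 + single j 1 ≤ d
  · rw [if_pos h, if_pos (hcond.1 h)]
  · rw [if_neg h, if_neg (fun hc => h (hcond.2 hc))]

lemma sub_apply' (d : Fin 4 →₀ ℕ) (i j k : Fin 4) :
    ((d - (single i 1 + single j 1) : Fin 4 →₀ ℕ)) k
      = d k - ((if i = k then 1 else 0) + (if j = k then 1 else 0)) := by
  simp [Finsupp.sub_apply, Finsupp.add_apply, Finsupp.single_apply]


noncomputable def G : MvPowerSeries (Fin 4) ℚ :=
  S (fun d => d 0 + d 1 = d 2 + d 3 ∧ d 3 ≤ d 0)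

lemma step3 : (1 - MvPowerSeries.X 1 * MvPowerSeries.X 2) * G
    = S (fun d => d 1 = 0 ∧ d 0 = d 2 + d 3) := by
  ext d
  rw [coeff_one_sub 1 2 (by decide)]
  have e0 : ((d - (single 1 1 + single 2 1) : Fin 4 →₀ ℕ)) 0 = d 0 := by
    simp [sub_apply']
  have e1 : ((d - (single 1 1 + single 2 1) : Fin 4 →₀ ℕ)) 1 = d 1 - 1 := by
    simp [sub_apply']
  have e2 : ((d - (single 1 1 + single 2 1) : Fin 4 →₀ ℕ)) 2 = d 2 - 1 := by
    simp [sub_apply']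
  have e3 : ((d - (single 1 1 + single 2 1) : Fin 4 →₀ ℕ)) 3 = d 3 := by
    simp [sub_apply']
  simp only [G, coeff_S, e0, e1, e2, e3]
  split_ifs <;> (try norm_num) <;> omega

lemma step2 : (1 - MvPowerSeries.X 0 * MvPowerSeries.X 3)
      * S (fun d => d 1 = 0 ∧ d 0 = d 2 + d 3)
    = S (fun d => d 1 = 0 ∧ d 3 = 0 ∧ d 0 = d 2) := by
  ext d
  rw [coeff_one_sub 0 3 (by decide)]
  have e0 : ((d - (single 0 1 + single 3 1) : Fin 4 →₀ ℕ)) 0 = d 0 - 1 := by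
    simp [sub_apply']
  have e1 : ((d - (single 0 1 + single 3 1) : Fin 4 →₀ ℕ)) 1 = d 1 := by
    simp [sub_apply']
  have e2 : ((d - (single 0 1 + single 3 1) : Fin 4 →₀ ℕ)) 2 = d 2 := by
    simp [sub_apply']
  have e3 : ((d - (single 0 1 + single 3 1) : Fin 4 →₀ ℕ)) 3 = d 3 - 1 := by
    simp [sub_apply']
  simp only [coeff_S, e0, e1, e2, e3]
  split_ifs <;> (try norm_num) <;> omega

lemma step1 : (1 - MvPowerSeries.X 0 * MvPowerSeries.X 2)
      * S (fun d => d 1 = 0 ∧ d 3 = 0 ∧ d 0 = d 2)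
    = 1 := by
  ext d
  rw [coeff_one_sub 0 2 (by decide)]
  have h0 : (d = 0) ↔ (d 0 = 0 ∧ d 1 = 0 ∧ d 2 = 0 ∧ d 3 = 0) := by
    constructor
    · rintro rfl; simp
    · rintro ⟨h0, h1, h2, h3⟩
      ext i
      fin_cases i <;> simpa
  rw [MvPowerSeries.coeff_one]
  have e0 : ((d - (single 0 1 + single 2 1) : Fin 4 →₀ ℕ)) 0 = d 0 - 1 := by
    simp [sub_apply']
  have e1 : ((d - (single 0 1 + single 2 1) : Fin 4 →₀ ℕ)) 1 = d 1 := by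
    simp [sub_apply']
  have e2 : ((d - (single 0 1 + single 2 1) : Fin 4 →₀ ℕ)) 2 = d 2 - 1 := by
    simp [sub_apply']
  have e3 : ((d - (single 0 1 + single 2 1) : Fin 4 →₀ ℕ)) 3 = d 3 := by
    simp [sub_apply']
  simp only [coeff_S, e0, e1, e2, e3, h0]
  split_ifs <;> (try norm_num) <;> omega

lemma prodG : ((1 - MvPowerSeries.X 0 * MvPowerSeries.X 2)
      * (1 - MvPowerSeries.X 0 * MvPowerSeries.X 3)
      * (1 - MvPowerSeries.X 1 * MvPowerSeries.X 2) : MvPowerSeries (Fin 4) ℚ) * G = 1 := by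
  have : ((1 - MvPowerSeries.X 0 * MvPowerSeries.X 2)
      * (1 - MvPowerSeries.X 0 * MvPowerSeries.X 3)
      * (1 - MvPowerSeries.X 1 * MvPowerSeries.X 2) : MvPowerSeries (Fin 4) ℚ) * G
      = (1 - MvPowerSeries.X 0 * MvPowerSeries.X 2)
        * ((1 - MvPowerSeries.X 0 * MvPowerSeries.X 3)
          * ((1 - MvPowerSeries.X 1 * MvPowerSeries.X 2) * G)) := by ring
  rw [this, step3, step2, step1]

lemma coeff_inv (d : Fin 4 →₀ ℕ) :
    MvPowerSeries.coeff (R := ℚ) d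
        (((1 - MvPowerSeries.X 0 * MvPowerSeries.X 2)
          * (1 - MvPowerSeries.X 0 * MvPowerSeries.X 3)
          * (1 - MvPowerSeries.X 1 * MvPowerSeries.X 2) : MvPowerSeries (Fin 4) ℚ)⁻¹)
      = if d 0 + d 1 = d 2 + d 3 ∧ d 3 ≤ d 0 then 1 else 0 := by
  have hc : MvPowerSeries.constantCoeff (σ := Fin 4) (R := ℚ)
      ((1 - MvPowerSeries.X 0 * MvPowerSeries.X 2)
        * (1 - MvPowerSeries.X 0 * MvPowerSeries.X 3)
        * (1 - MvPowerSeries.X 1 * MvPowerSeries.X 2)) ≠ 0 := by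
    simp [map_mul, map_sub, MvPowerSeries.constantCoeff_X]
  have : G = ((1 - MvPowerSeries.X 0 * MvPowerSeries.X 2)
      * (1 - MvPowerSeries.X 0 * MvPowerSeries.X 3)
      * (1 - MvPowerSeries.X 1 * MvPowerSeries.X 2) : MvPowerSeries (Fin 4) ℚ)⁻¹ :=
    (MvPowerSeries.eq_inv_iff_mul_eq_one hc).2 (by rw [mul_comm]; exact prodG)
  rw [← this, G, coeff_S]
  split_ifs <;> rfl


lemma coeff_mono (d : Fin 4 →₀ ℕ) (p q r s : ℕ) :
    MvPowerSeries.coeff (R := ℚ) d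
        ((MvPowerSeries.X 0 ^ p * MvPowerSeries.X 1 ^ q)
          * (MvPowerSeries.X 2 ^ r * MvPowerSeries.X 3 ^ s) : MvPowerSeries (Fin 4) ℚ)
      = if d 0 = p ∧ d 1 = q ∧ d 2 = r ∧ d 3 = s then 1 else 0 := by
  rw [X_pow_eq, X_pow_eq, X_pow_eq, X_pow_eq, monomial_mul_monomial, monomial_mul_monomial,
    monomial_mul_monomial, coeff_monomial]
  have hiff : (d = (single (0:Fin 4) p + single 1 q + (single 2 r + single 3 s)))
      ↔ (d 0 = p ∧ d 1 = q ∧ d 2 = r ∧ d 3 = s) := by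
    constructor
    · rintro rfl
      refine ⟨?_, ?_, ?_, ?_⟩ <;>
        simp [Finsupp.add_apply, Finsupp.single_apply]
    · rintro ⟨h0, h1, h2, h3⟩
      ext i
      fin_cases i <;>
        simp [Finsupp.add_apply, Finsupp.single_apply, h0, h1, h2, h3]
  simp only [mul_one, one_mul]
  by_cases h : d 0 = p ∧ d 1 = q ∧ d 2 = r ∧ d 3 = s
  · rw [if_pos (hiff.2 h), if_pos h]
  · rw [if_neg (fun hc => h (hiff.1 hc)), if_neg h]

lemma sum_ind1 (s : Finset ℕ) (c0 c1 c2 c3 m b a : ℕ) :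
    (∑ j ∈ s, if c0 = j ∧ c1 = m - j ∧ c2 = b ∧ c3 = a then (1:ℚ) else 0)
      = if c0 ∈ s ∧ c1 = m - c0 ∧ c2 = b ∧ c3 = a then 1 else 0 := by
  have h1 : ∀ j ∈ s, (if c0 = j ∧ c1 = m - j ∧ c2 = b ∧ c3 = a then (1:ℚ) else 0)
      = if j = c0 then (if c1 = m - j ∧ c2 = b ∧ c3 = a then (1:ℚ) else 0) else 0 := by
    intro j _
    split_ifs <;> first | rfl | omega
  rw [Finset.sum_congr rfl h1,
    Finset.sum_ite_eq' s c0 (fun j => if c1 = m - j ∧ c2 = b ∧ c3 = a then (1:ℚ) else 0)]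
  split_ifs <;> first | rfl | tauto

lemma sum_ind2 (s : Finset ℕ) (c0 c1 c2 c3 m b a : ℕ) :
    (∑ j ∈ s, if c0 = a ∧ c1 = b ∧ c2 = j ∧ c3 = m - j then (1:ℚ) else 0)
      = if c2 ∈ s ∧ c0 = a ∧ c1 = b ∧ c3 = m - c2 then 1 else 0 := by
  have h1 : ∀ j ∈ s, (if c0 = a ∧ c1 = b ∧ c2 = j ∧ c3 = m - j then (1:ℚ) else 0)
      = if j = c2 then (if c0 = a ∧ c1 = b ∧ c3 = m - j then (1:ℚ) else 0) else 0 := by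
    intro j _
    split_ifs <;> first | rfl | omega
  rw [Finset.sum_congr rfl h1,
    Finset.sum_ite_eq' s c2 (fun j => if c0 = a ∧ c1 = b ∧ c3 = m - j then (1:ℚ) else 0)]
  split_ifs <;> first | rfl | tauto

/-- the coefficient of a single term of the Cauchy sum -/
noncomputable def F (a b : ℕ) (d : Fin 4 →₀ ℕ) : ℚ :=
  if b < a then
    (if d 0 = a ∧ d 1 = b ∧ b ≤ d 2 ∧ d 2 < a ∧ d 2 + d 3 = a + b then 1 else 0)
  else if a < b then
    (if a ≤ d 0 ∧ d 0 ≤ b ∧ d 0 + d 1 = a + b ∧ d 2 = b ∧ d 3 = a then 1 else 0)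
  else (if d 0 = a ∧ d 1 = a ∧ d 2 = a ∧ d 3 = a then 1 else 0)

lemma term_coeff (a b : ℕ) (d : Fin 4 →₀ ℕ) :
    MvPowerSeries.coeff (R := ℚ) d
        (keyK a b (MvPowerSeries.X 0) (MvPowerSeries.X 1)
          * keyKhat b a (MvPowerSeries.X 2) (MvPowerSeries.X 3)) = F a b d := by
  rcases lt_trichotomy a b with h | h | h
  · -- a < b : keyK is the sum, keyKhat b a is the monomial
    rw [keyK, if_neg (not_le.2 h), keyKhat, if_pos h.le, Finset.sum_mul]
    rw [map_sum]
    have hterm : ∀ j ∈ Finset.Icc a b,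
        MvPowerSeries.coeff (R := ℚ) d
            ((MvPowerSeries.X 0 ^ j * MvPowerSeries.X 1 ^ (a + b - j))
              * (MvPowerSeries.X 2 ^ b * MvPowerSeries.X 3 ^ a) : MvPowerSeries (Fin 4) ℚ)
          = if d 0 = j ∧ d 1 = a + b - j ∧ d 2 = b ∧ d 3 = a then (1:ℚ) else 0 :=
      fun j _ => coeff_mono d j (a + b - j) b a
    rw [Finset.sum_congr rfl hterm, sum_ind1 (Finset.Icc a b) (d 0) (d 1) (d 2) (d 3) (a+b) b a]
    rw [F, if_neg (show ¬ b < a by omega), if_pos h]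
    simp only [Finset.mem_Icc]
    split_ifs <;> (try norm_num) <;> omega
  · -- a = b
    subst h
    rw [keyK, if_pos le_rfl, keyKhat, if_pos le_rfl, F]
    have := coeff_mono d a a a a
    rw [show (MvPowerSeries.X 0 ^ a * MvPowerSeries.X 1 ^ a : MvPowerSeries (Fin 4) ℚ)
        * (MvPowerSeries.X 2 ^ a * MvPowerSeries.X 3 ^ a)
      = (MvPowerSeries.X 0 ^ a * MvPowerSeries.X 1 ^ a)
        * (MvPowerSeries.X 2 ^ a * MvPowerSeries.X 3 ^ a) from rfl] at this
    rw [this, if_neg (lt_irrefl a), if_neg (lt_irrefl a)]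
  · -- b < a : keyK is monomial, keyKhat is sum minus monomial
    rw [keyK, if_pos h.le, keyKhat, if_neg (not_le.2 h), mul_sub, Finset.mul_sum]
    rw [map_sub, map_sum]
    have hterm : ∀ j ∈ Finset.Icc b a,
        MvPowerSeries.coeff (R := ℚ) d
            ((MvPowerSeries.X 0 ^ a * MvPowerSeries.X 1 ^ b)
              * (MvPowerSeries.X 2 ^ j * MvPowerSeries.X 3 ^ (b + a - j)) : MvPowerSeries (Fin 4) ℚ)
          = if d 0 = a ∧ d 1 = b ∧ d 2 = j ∧ d 3 = b + a - j then (1:ℚ) else 0 :=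
      fun j _ => coeff_mono d a b j (b + a - j)
    rw [Finset.sum_congr rfl hterm, sum_ind2 (Finset.Icc b a) (d 0) (d 1) (d 2) (d 3) (b+a) b a]
    have h2 : MvPowerSeries.coeff (R := ℚ) d
        ((MvPowerSeries.X 0 ^ a * MvPowerSeries.X 1 ^ b)
          * (MvPowerSeries.X 2 ^ a * MvPowerSeries.X 3 ^ b) : MvPowerSeries (Fin 4) ℚ)
      = if d 0 = a ∧ d 1 = b ∧ d 2 = a ∧ d 3 = b then 1 else 0 := coeff_mono d a b a b
    rw [h2, F, if_pos h]
    simp only [Finset.mem_Icc]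
    split_ifs <;> (try norm_num) <;> omega

end CauchyAux

/-- the Cauchy identity
`Σ_{u∈ℕ²} K_u(x₁,x₂) K̂_{(u₂,u₁)}(y₁,y₂) = 1/((1-x₁y₁)(1-x₁y₂)(1-x₂y₁))`
as formal power series in `x₁ = X 0`, `x₂ = X 1`, `y₁ = X 2`, `y₂ = X 3`, stated
coefficientwise (for each exponent `d`, only finitely many `u` contribute, and the sum
of coefficients is the corresponding coefficient of the right-hand side). -/
theorem cauchy_identity_keys (d : Fin 4 →₀ ℕ) :
    (finsum fun u : ℕ × ℕ =>
      MvPowerSeries.coeff (R := ℚ) d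
        (keyK u.1 u.2 (MvPowerSeries.X 0) (MvPowerSeries.X 1)
          * keyKhat u.2 u.1 (MvPowerSeries.X 2) (MvPowerSeries.X 3)))
    = MvPowerSeries.coeff (R := ℚ) d
        (((1 - MvPowerSeries.X 0 * MvPowerSeries.X 2)
          * (1 - MvPowerSeries.X 0 * MvPowerSeries.X 3)
          * (1 - MvPowerSeries.X 1 * MvPowerSeries.X 2) : MvPowerSeries (Fin 4) ℚ)⁻¹) := by
  rw [CauchyAux.coeff_inv]
  by_cases hc : d 2 < d 0
  · have hz : ∀ u : ℕ × ℕ, u ≠ (d 0, d 1) →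
        MvPowerSeries.coeff (R := ℚ) d
          (keyK u.1 u.2 (MvPowerSeries.X 0) (MvPowerSeries.X 1)
            * keyKhat u.2 u.1 (MvPowerSeries.X 2) (MvPowerSeries.X 3)) = 0 := by
      rintro ⟨a, b⟩ hu
      have hu' : ¬(a = d 0 ∧ b = d 1) := by simpa [Prod.ext_iff] using hu
      rw [CauchyAux.term_coeff]
      unfold CauchyAux.F
      split_ifs <;> first | rfl | (exfalso; omega)
    rw [finsum_eq_single _ _ hz, CauchyAux.term_coeff]
    unfold CauchyAux.F
    split_ifs <;> first | rfl | (exfalso; omega)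
  · have hz : ∀ u : ℕ × ℕ, u ≠ (d 3, d 2) →
        MvPowerSeries.coeff (R := ℚ) d
          (keyK u.1 u.2 (MvPowerSeries.X 0) (MvPowerSeries.X 1)
            * keyKhat u.2 u.1 (MvPowerSeries.X 2) (MvPowerSeries.X 3)) = 0 := by
      rintro ⟨a, b⟩ hu
      have hu' : ¬(a = d 3 ∧ b = d 2) := by simpa [Prod.ext_iff] using hu
      rw [CauchyAux.term_coeff]
      unfold CauchyAux.F
      split_ifs <;> first | rfl | (exfalso; omega)
    rw [finsum_eq_single _ _ hz, CauchyAux.term_coeff]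
    unfold CauchyAux.F
    split_ifs <;> first | rfl | (exfalso; omega)
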